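/- Let m, n ≥ 1, let p : Fin m → ℚ and q : Fin n → ℚ be probability vectors with strictly positive rational entries (p(i) > 0 for all i, q(j) > 0 for all j, ∑_i p(i) = 1, ∑_j q(j) = 1). Let B be the least common multiple of the denominators of the p(i) and let D be the least common multiple of the denominators of the q(j). Let c : Fin m × Fin n → ℝ be an arbitrary cost function. Then there exists a coupling γ of p and q (a matrix γ : Fin m → Fin n → ℝ with γ(i,j) ≥ 0 for all i,j, ∑_j γ(i,j) = p(i) for every i, and ∑_i γ(i,j) = q(j) for every j) such that γ minimizes the Kantorovich cost ∑_{i,j} c(i,j) γ(i,j) among all such couplings and every entry of γ is an integer multiple of 1/lcm(B,D), i.e., for every (i,j) there exists a natural number k with γ(i,j) = k/lcm(B,D). -/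

import Mathlib

lemma scaled_nat (x : ℚ) (hx : 0 < x) (L : ℕ) (hL : 0 < L) (hdvd : x.den ∣ L) :
    ∃ a : ℕ, (a : ℚ) = x * L ∧ 0 < a := by
  refine ⟨x.num.toNat * (L / x.den), ?_, ?_⟩
  · have hnum : (0:ℤ) < x.num := Rat.num_pos.2 hx
    have hd : (x.den : ℚ) ≠ 0 := by exact_mod_cast x.den_pos.ne'
    have hLd : (x.den : ℕ) * (L / x.den) = L := Nat.mul_div_cancel' hdvd
    have hxd : x * (x.den : ℚ) = (x.num : ℚ) := Rat.mul_den_eq_num x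
    have htn : ((x.num.toNat : ℕ) : ℚ) = (x.num : ℚ) := by
      exact_mod_cast Int.toNat_of_nonneg hnum.le
    calc ((x.num.toNat * (L / x.den) : ℕ) : ℚ)
        = (x.num : ℚ) * ((L / x.den : ℕ) : ℚ) := by
          push_cast [htn]; ring
      _ = x * ((x.den : ℚ) * ((L / x.den : ℕ) : ℚ)) := by rw [← hxd]; ring
      _ = x * L := by
          congr 1
          exact_mod_cast congrArg (fun t : ℕ => (t : ℚ)) hLd
  · have h1 : 0 < x.num.toNat := by have := Rat.num_pos.2 hx; omega
    exact Nat.mul_pos h1 (Nat.div_pos (Nat.le_of_dvd hL hdvd) x.pos)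


lemma birkhoff_bound (K : ℕ) (C : Matrix (Fin K) (Fin K) ℝ)
    (M : Matrix (Fin K) (Fin K) ℝ) (hM : M ∈ doublyStochastic ℝ (Fin K)) (v : ℝ)
    (hv : ∀ τ : Equiv.Perm (Fin K), v ≤ ∑ x, C x (τ x)) :
    v ≤ ∑ x, ∑ y, C x y * M x y := by
  classical
  set f : Matrix (Fin K) (Fin K) ℝ → ℝ := fun W => ∑ x, ∑ y, C x y * W x y with hfdef
  have hf : IsLinearMap ℝ f := by
    constructor
    · intro W1 W2
      simp only [hfdef, Matrix.add_apply, mul_add, Finset.sum_add_distrib]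
    · intro t W
      simp only [hfdef, Matrix.smul_apply, smul_eq_mul, Finset.mul_sum]
      exact Finset.sum_congr rfl fun x _ => Finset.sum_congr rfl fun y _ => by ring
  have hsub : {P : Matrix (Fin K) (Fin K) ℝ | ∃ τ : Equiv.Perm (Fin K), τ.permMatrix ℝ = P}
      ⊆ {W : Matrix (Fin K) (Fin K) ℝ | v ≤ f W} := by
    rintro P ⟨τ, rfl⟩
    have hfP : f (τ.permMatrix ℝ) = ∑ x, C x (τ x) := by
      refine Finset.sum_congr rfl fun x _ => ?_
      simp [Equiv.Perm.permMatrix, PEquiv.toMatrix_apply, Equiv.toPEquiv_apply,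
        Option.mem_def, mul_ite]
    show v ≤ f (τ.permMatrix ℝ)
    rw [hfP]
    exact hv τ
  have hMch : M ∈ convexHull ℝ
      {P : Matrix (Fin K) (Fin K) ℝ | ∃ τ : Equiv.Perm (Fin K), τ.permMatrix ℝ = P} := by
    rw [← doublyStochastic_eq_convexHull_permMatrix]
    exact hM
  exact convexHull_min hsub (convex_halfSpace_ge hf v) hMch

lemma block_map (m L : ℕ) (a : Fin m → ℕ) (hsum : ∑ i, a i = L) :
    ∃ r : Fin L → Fin m, ∀ (g : Fin m → ℝ), ∑ x, g (r x) = ∑ i, (a i : ℝ) * g i := by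
  have hcard : Fintype.card (Σ i, Fin (a i)) = Fintype.card (Fin L) := by
    simp [hsum]
  obtain ⟨e⟩ : Nonempty ((Σ i, Fin (a i)) ≃ Fin L) := ⟨Fintype.equivOfCardEq hcard⟩
  refine ⟨fun x => (e.symm x).1, fun g => ?_⟩
  rw [← Equiv.sum_comp e (fun x => g ((e.symm x).1))]
  simp only [Equiv.symm_apply_apply]
  rw [← Finset.univ_sigma_univ, Finset.sum_sigma]
  simp [mul_comm]

theorem kantorovich_quantized_solution_rational
    (m n : ℕ) (hm : 1 ≤ m) (hn : 1 ≤ n)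
    (p : Fin m → ℚ) (q : Fin n → ℚ)
    (hp : ∀ i, 0 < p i) (hq : ∀ j, 0 < q j)
    (hps : ∑ i, p i = 1) (hqs : ∑ j, q j = 1)
    (B D : ℕ)
    (hB : B = Finset.univ.lcm fun i => (p i).den)
    (hD : D = Finset.univ.lcm fun j => (q j).den)
    (c : Fin m × Fin n → ℝ) :
    ∃ γ : Fin m → Fin n → ℝ,
      (∀ i j, 0 ≤ γ i j) ∧
      (∀ i, ∑ j, γ i j = (p i : ℝ)) ∧
      (∀ j, ∑ i, γ i j = (q j : ℝ)) ∧
      (∀ γ' : Fin m → Fin n → ℝ,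
        (∀ i j, 0 ≤ γ' i j) →
        (∀ i, ∑ j, γ' i j = (p i : ℝ)) →
        (∀ j, ∑ i, γ' i j = (q j : ℝ)) →
        ∑ i, ∑ j, c (i, j) * γ i j ≤ ∑ i, ∑ j, c (i, j) * γ' i j) ∧
      (∀ i j, ∃ k : ℕ, γ i j = (k : ℝ) / (Nat.lcm B D : ℝ)) := by
  classical
  set L : ℕ := Nat.lcm B D with hLdef
  have hB0 : B ≠ 0 := by
    rw [hB]
    simp [Finset.lcm_eq_zero_iff, Rat.den_ne_zero]
  have hD0 : D ≠ 0 := by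
    rw [hD]
    simp [Finset.lcm_eq_zero_iff, Rat.den_ne_zero]
  have hL : 0 < L := Nat.pos_of_ne_zero (Nat.lcm_ne_zero hB0 hD0)
  have hLR : (0:ℝ) < L := by exact_mod_cast hL
  choose a haq ha0 using fun i => scaled_nat (p i) (hp i) L hL
    (dvd_trans (hB ▸ Finset.dvd_lcm (Finset.mem_univ i)) (Nat.dvd_lcm_left B D))
  choose b hbq hb0 using fun j => scaled_nat (q j) (hq j) L hL
    (dvd_trans (hD ▸ Finset.dvd_lcm (Finset.mem_univ j)) (Nat.dvd_lcm_right B D))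
  have hsa : ∑ i, a i = L := by
    have : ((∑ i, a i : ℕ) : ℚ) = ((L : ℕ) : ℚ) := by
      push_cast [haq]
      rw [← Finset.sum_mul, hps, one_mul]
    exact_mod_cast this
  have hsb : ∑ j, b j = L := by
    have : ((∑ j, b j : ℕ) : ℚ) = ((L : ℕ) : ℚ) := by
      push_cast [hbq]
      rw [← Finset.sum_mul, hqs, one_mul]
    exact_mod_cast this
  obtain ⟨r, hr⟩ := block_map m L a hsa
  obtain ⟨s, hs⟩ := block_map n L b hsb
  have haR : ∀ i, ((a i : ℝ)) = (p i : ℝ) * L := by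
    intro i
    have := haq i
    exact_mod_cast congrArg (fun x : ℚ => (x : ℝ)) this
  have hbR : ∀ j, ((b j : ℝ)) = (q j : ℝ) * L := by
    intro j
    exact_mod_cast congrArg (fun x : ℚ => (x : ℝ)) (hbq j)
  have haR0 : ∀ i, (0:ℝ) < a i := fun i => by exact_mod_cast ha0 i
  have hbR0 : ∀ j, (0:ℝ) < b j := fun j => by exact_mod_cast hb0 j
  -- choose optimal permutation
  set F : Equiv.Perm (Fin L) → ℝ := fun σ => ∑ x, c (r x, s (σ x)) with hF
  obtain ⟨σ, -, hσ⟩ := Finset.exists_min_image Finset.univ F ⟨1, Finset.mem_univ 1⟩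
  set N : Fin m → Fin n → ℕ :=
    fun i j => (Finset.univ.filter fun x => r x = i ∧ s (σ x) = j).card with hNdef
  have hN : ∀ i j, ((N i j : ℕ) : ℝ) = ∑ x, (if r x = i ∧ s (σ x) = j then (1:ℝ) else 0) := by
    intro i j
    simp only [hNdef, Finset.card_filter, Nat.cast_sum]
    exact Finset.sum_congr rfl fun x _ => by split <;> simp
  refine ⟨fun i j => (N i j : ℝ) / L, ?_, ?_, ?_, ?_, ?_⟩
  · intro i j
    exact div_nonneg (Nat.cast_nonneg _) (Nat.cast_nonneg _)
  · -- row sums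
    intro i
    have h1 : ∑ j, ((N i j : ℕ) : ℝ) = (a i : ℝ) := by
      calc ∑ j, ((N i j : ℕ) : ℝ)
          = ∑ j, ∑ x, (if r x = i ∧ s (σ x) = j then (1:ℝ) else 0) :=
            Finset.sum_congr rfl fun j _ => hN i j
        _ = ∑ x, ∑ j, (if r x = i ∧ s (σ x) = j then (1:ℝ) else 0) := Finset.sum_comm
        _ = ∑ x, (if r x = i then (1:ℝ) else 0) := by
            refine Finset.sum_congr rfl fun x _ => ?_
            by_cases h : r x = i <;> simp [h]
        _ = ∑ i', (a i' : ℝ) * (if i' = i then (1:ℝ) else 0) :=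
            hr (fun i' => if i' = i then (1:ℝ) else 0)
        _ = (a i : ℝ) := by simp
    rw [← Finset.sum_div, h1, haR i]
    field_simp
  · -- column sums
    intro j
    have h1 : ∑ i, ((N i j : ℕ) : ℝ) = (b j : ℝ) := by
      calc ∑ i, ((N i j : ℕ) : ℝ)
          = ∑ i, ∑ x, (if r x = i ∧ s (σ x) = j then (1:ℝ) else 0) :=
            Finset.sum_congr rfl fun i _ => hN i j
        _ = ∑ x, ∑ i, (if r x = i ∧ s (σ x) = j then (1:ℝ) else 0) := Finset.sum_comm
        _ = ∑ x, (if s (σ x) = j then (1:ℝ) else 0) := by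
            refine Finset.sum_congr rfl fun x _ => ?_
            by_cases h : s (σ x) = j <;> simp [h]
        _ = ∑ x, (if s x = j then (1:ℝ) else 0) :=
            Equiv.sum_comp σ (fun x => if s x = j then (1:ℝ) else 0)
        _ = ∑ j', (b j' : ℝ) * (if j' = j then (1:ℝ) else 0) :=
            hs (fun j' => if j' = j then (1:ℝ) else 0)
        _ = (b j : ℝ) := by simp
    rw [← Finset.sum_div, h1, hbR j]
    field_simp
  · -- optimality
    intro γ' hγ'0 hγ'r hγ'c
    have hcostγ : ∑ i, ∑ j, c (i, j) * ((N i j : ℝ) / L) = F σ / L := by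
      rw [eq_div_iff hLR.ne']
      have hdiv : ∀ i, ∑ j, c (i, j) * ((N i j : ℝ) / L) = (∑ j, c (i, j) * (N i j : ℝ)) / L := by
        intro i; rw [Finset.sum_div]; exact Finset.sum_congr rfl fun j _ => by ring
      rw [Finset.sum_congr rfl fun i _ => hdiv i, ← Finset.sum_div,
        div_mul_cancel₀ _ hLR.ne']
      calc ∑ i, ∑ j, c (i, j) * ((N i j : ℕ) : ℝ)
          = ∑ i, ∑ j, ∑ x, (if r x = i ∧ s (σ x) = j then c (i, j) else 0) := by
            refine Finset.sum_congr rfl fun i _ => Finset.sum_congr rfl fun j _ => ?_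
            rw [hN, Finset.mul_sum]
            exact Finset.sum_congr rfl fun x _ => by split <;> simp
        _ = ∑ i, ∑ x, ∑ j, (if r x = i ∧ s (σ x) = j then c (i, j) else 0) :=
            Finset.sum_congr rfl fun i _ => Finset.sum_comm
        _ = ∑ x, ∑ i, ∑ j, (if r x = i ∧ s (σ x) = j then c (i, j) else 0) :=
            Finset.sum_comm
        _ = F σ := by
            refine Finset.sum_congr rfl fun x _ => ?_
            have h2 : ∀ i, ∑ j, (if r x = i ∧ s (σ x) = j then c (i, j) else 0)
                = if r x = i then c (i, s (σ x)) else 0 := by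
              intro i; by_cases h : r x = i <;> simp [h]
            rw [Finset.sum_congr rfl fun i _ => h2 i]
            simp
    rw [hcostγ]
    have hrowM : ∀ x : Fin L,
        ∑ y, (L : ℝ) * γ' (r x) (s y) / ((a (r x) : ℝ) * (b (s y) : ℝ)) = 1 := by
      intro x
      have hp0 : (p (r x) : ℝ) ≠ 0 := by have := hp (r x); positivity
      calc ∑ y, (L : ℝ) * γ' (r x) (s y) / ((a (r x) : ℝ) * (b (s y) : ℝ))
          = ∑ j, (b j : ℝ) * ((L : ℝ) * γ' (r x) j / ((a (r x) : ℝ) * (b j : ℝ))) :=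
            hs (fun j => (L : ℝ) * γ' (r x) j / ((a (r x) : ℝ) * (b j : ℝ)))
        _ = ∑ j, ((L : ℝ) / (a (r x) : ℝ)) * γ' (r x) j := by
            refine Finset.sum_congr rfl fun j _ => ?_
            have h4 := (haR0 (r x)).ne'
            have h5 := (hbR0 j).ne'
            field_simp
        _ = ((L : ℝ) / (a (r x) : ℝ)) * (p (r x) : ℝ) := by rw [← Finset.mul_sum, hγ'r]
        _ = 1 := by rw [haR (r x)]; field_simp
    have hcolM : ∀ y : Fin L,
        ∑ x, (L : ℝ) * γ' (r x) (s y) / ((a (r x) : ℝ) * (b (s y) : ℝ)) = 1 := by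
      intro y
      have hq0 : (q (s y) : ℝ) ≠ 0 := by have := hq (s y); positivity
      calc ∑ x, (L : ℝ) * γ' (r x) (s y) / ((a (r x) : ℝ) * (b (s y) : ℝ))
          = ∑ i, (a i : ℝ) * ((L : ℝ) * γ' i (s y) / ((a i : ℝ) * (b (s y) : ℝ))) :=
            hr (fun i => (L : ℝ) * γ' i (s y) / ((a i : ℝ) * (b (s y) : ℝ)))
        _ = ∑ i, ((L : ℝ) / (b (s y) : ℝ)) * γ' i (s y) := by
            refine Finset.sum_congr rfl fun i _ => ?_
            have h4 := (haR0 i).ne'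
            have h5 := (hbR0 (s y)).ne'
            field_simp
        _ = ((L : ℝ) / (b (s y) : ℝ)) * (q (s y) : ℝ) := by rw [← Finset.mul_sum, hγ'c]
        _ = 1 := by rw [hbR (s y)]; field_simp
    have hM : (fun x y => (L : ℝ) * γ' (r x) (s y) / ((a (r x) : ℝ) * (b (s y) : ℝ)))
        ∈ doublyStochastic ℝ (Fin L) := by
      refine mem_doublyStochastic_iff_sum.2 ?_
      exact ⟨fun x y => div_nonneg (mul_nonneg hLR.le (hγ'0 _ _))
        (mul_nonneg (haR0 _).le (hbR0 _).le), hrowM, hcolM⟩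
    have hbb := birkhoff_bound L (fun x y => c (r x, s y)) _ hM (F σ)
      (fun τ => hσ τ (Finset.mem_univ τ))
    have hfM : ∑ x, ∑ y, c (r x, s y) *
        ((L : ℝ) * γ' (r x) (s y) / ((a (r x) : ℝ) * (b (s y) : ℝ)))
        = (L : ℝ) * ∑ i, ∑ j, c (i, j) * γ' i j := by
      calc ∑ x, ∑ y, c (r x, s y) *
            ((L : ℝ) * γ' (r x) (s y) / ((a (r x) : ℝ) * (b (s y) : ℝ)))
          = ∑ x, ∑ j, (b j : ℝ) * (c (r x, j) *
              ((L : ℝ) * γ' (r x) j / ((a (r x) : ℝ) * (b j : ℝ)))) :=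
            Finset.sum_congr rfl fun x _ =>
              hs (fun j => c (r x, j) * ((L : ℝ) * γ' (r x) j / ((a (r x) : ℝ) * (b j : ℝ))))
        _ = ∑ x, ((L : ℝ) / (a (r x) : ℝ)) * ∑ j, c (r x, j) * γ' (r x) j := by
            refine Finset.sum_congr rfl fun x _ => ?_
            rw [Finset.mul_sum]
            refine Finset.sum_congr rfl fun j _ => ?_
            have h4 := (haR0 (r x)).ne'
            have h5 := (hbR0 j).ne'
            field_simp
        _ = ∑ i, (a i : ℝ) * (((L : ℝ) / (a i : ℝ)) * ∑ j, c (i, j) * γ' i j) :=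
            hr (fun i => ((L : ℝ) / (a i : ℝ)) * ∑ j, c (i, j) * γ' i j)
        _ = (L : ℝ) * ∑ i, ∑ j, c (i, j) * γ' i j := by
            rw [Finset.mul_sum]
            refine Finset.sum_congr rfl fun i _ => ?_
            have h4 := (haR0 i).ne'
            field_simp
    rw [div_le_iff₀ hLR, mul_comm]
    rw [hfM] at hbb
    exact hbb
  · intro i j
    exact ⟨N i j, rfl⟩
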